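/- Let K = ℚ(√3) and let I = ⟨1 - √3⟩ be the principal ideal of O_K = ℤ[√3] generated by 1 - √3. Then the lattice Λ_K(I) = σ(I) ⊂ ℝ² is well-rounded with exactly 6 minimal vectors, namely S(Λ_K(I)) = { ±(2,2), ±(1+√3, 1-√3), ±(1-√3, 1+√3) }, and Λ_K(I) is similar to the hexagonal lattice Λ_h. -/

import Mathlib

open NumberField

/-- The minimum `|Λ|` of a planar lattice `Λ = S ⊆ ℝ²`: the infimum of squared
Euclidean norms of nonzero points. -/
noncomputable def pMin (S : Set (EuclideanSpace ℝ (Fin 2))) : ℝ :=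
  sInf {r : ℝ | ∃ x ∈ S, x ≠ 0 ∧ ‖x‖ ^ 2 = r}

/-- The set of minimal vectors `S(Λ)` of a planar lattice. -/
def pMinVecs (S : Set (EuclideanSpace ℝ (Fin 2))) : Set (EuclideanSpace ℝ (Fin 2)) :=
  {x ∈ S | ‖x‖ ^ 2 = pMin S}

/-- A planar lattice is well-rounded if its minimal vectors span `ℝ²`. -/
def pIsWellRounded (S : Set (EuclideanSpace ℝ (Fin 2))) : Prop :=
  Submodule.span ℝ (pMinVecs S) = ⊤

/-- Two subsets of `ℝ²` are similar if one is obtained from the other by applying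
an orthogonal transformation and multiplying by a nonzero scalar. -/
def pSimilar (S T : Set (EuclideanSpace ℝ (Fin 2))) : Prop :=
  ∃ (α : ℝ) (f : EuclideanSpace ℝ (Fin 2) ≃ₗᵢ[ℝ] EuclideanSpace ℝ (Fin 2)),
    α ≠ 0 ∧ T = (fun x => α • f x) '' S

/-- The vector `(a, b)` in `ℝ²` with its Euclidean structure. -/
noncomputable def vec2 (a b : ℝ) : EuclideanSpace ℝ (Fin 2) :=
  (WithLp.equiv 2 (Fin 2 → ℝ)).symm ![a, b]

/-- The hexagonal lattice, spanned over `ℤ` by `(1,0)` and `(1/2, √3/2)`. -/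
noncomputable def hexLattice : Submodule ℤ (EuclideanSpace ℝ (Fin 2)) :=
  Submodule.span ℤ {vec2 1 0, vec2 (1/2) (Real.sqrt 3 / 2)}

noncomputable def wA : EuclideanSpace ℝ (Fin 2) := vec2 2 2
noncomputable def wB : EuclideanSpace ℝ (Fin 2) :=
  vec2 (1 - Real.sqrt 3) (1 + Real.sqrt 3)

lemma vec2_ext {x y : EuclideanSpace ℝ (Fin 2)} (h0 : x 0 = y 0) (h1 : x 1 = y 1) :
    x = y := by
  exact PiLp.ext (fun i => by fin_cases i <;> assumption)

@[simp] lemma vec2_app0 (a b : ℝ) : vec2 a b 0 = a := rfl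
@[simp] lemma vec2_app1 (a b : ℝ) : vec2 a b 1 = b := rfl

lemma norm_sq_vec2 (a b : ℝ) : ‖vec2 a b‖ ^ 2 = a ^ 2 + b ^ 2 := by
  rw [EuclideanSpace.norm_eq, Real.sq_sqrt (by positivity)]
  simp [Fin.sum_univ_two, vec2, sq_abs]

lemma sqrt3_sq : Real.sqrt 3 ^ 2 = 3 := Real.sq_sqrt (by norm_num)
lemma sqrt3_gt : 1 < Real.sqrt 3 := by
  nlinarith [Real.sq_sqrt (show (0:ℝ) ≤ 3 by norm_num), Real.sqrt_nonneg 3]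
lemma sqrt3_lt : Real.sqrt 3 < 2 := by
  nlinarith [Real.sq_sqrt (show (0:ℝ) ≤ 3 by norm_num), Real.sqrt_nonneg 3]

lemma rep_eq (a b : ℤ) :
    (a : ℤ) • wA + (b : ℤ) • wB =
      vec2 (2*a + b*(1 - Real.sqrt 3)) (2*a + b*(1 + Real.sqrt 3)) := by
  rw [← Int.cast_smul_eq_zsmul ℝ, ← Int.cast_smul_eq_zsmul ℝ]
  apply vec2_ext <;> simp [wA, wB] <;> ring

lemma mem_span_iff (x : EuclideanSpace ℝ (Fin 2)) :
    x ∈ Submodule.span ℤ {wA, wB} ↔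
      ∃ a b : ℤ, x = vec2 (2*a + b*(1 - Real.sqrt 3)) (2*a + b*(1 + Real.sqrt 3)) := by
  rw [Submodule.mem_span_pair]
  constructor
  · rintro ⟨a, b, rfl⟩; exact ⟨a, b, rep_eq a b⟩
  · rintro ⟨a, b, rfl⟩; exact ⟨a, b, rep_eq a b⟩

lemma norm_rep (a b : ℤ) :
    ‖vec2 (2*a + b*(1 - Real.sqrt 3)) (2*a + b*(1 + Real.sqrt 3))‖ ^ 2
      = 8 * ((a:ℝ)^2 + a*b + b^2) := by
  rw [norm_sq_vec2]
  linear_combination (2*(b:ℝ)^2) * sqrt3_sq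

lemma rep_ne_zero (a b : ℤ) (h : ¬(a = 0 ∧ b = 0)) :
    vec2 (2*a + b*(1 - Real.sqrt 3)) (2*a + b*(1 + Real.sqrt 3)) ≠ 0 := by
  intro hx
  have h0 : (2*a + b*(1 - Real.sqrt 3) : ℝ) = 0 := congrArg (fun v => v 0) hx
  have h1 : (2*a + b*(1 + Real.sqrt 3) : ℝ) = 0 := congrArg (fun v => v 1) hx
  have hs : (0:ℝ) < Real.sqrt 3 := by linarith [sqrt3_gt]
  have hb : (b:ℝ) = 0 := by
    have : 2 * (b:ℝ) * Real.sqrt 3 = 0 := by linarith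
    rcases mul_eq_zero.mp this with h | h
    · rcases mul_eq_zero.mp h with h | h
      · norm_num at h
      · exact h
    · exact absurd h (ne_of_gt hs)
  have ha : (a:ℝ) = 0 := by nlinarith
  exact h ⟨by exact_mod_cast ha, by exact_mod_cast hb⟩

lemma int_nonneg (a b : ℤ) : 0 ≤ a^2 + a*b + b^2 := by
  nlinarith [sq_nonneg (2*a+b), sq_nonneg b]

lemma int_pos (a b : ℤ) (h : ¬(a = 0 ∧ b = 0)) : 1 ≤ a^2 + a*b + b^2 := by
  rcases lt_or_eq_of_le (int_nonneg a b) with h' | h'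
  · omega
  · exfalso
    have hb : b = 0 := by nlinarith [sq_nonneg (2*a+b), sq_nonneg b]
    have ha : a = 0 := by nlinarith
    exact h ⟨ha, hb⟩

lemma int_classify (a b : ℤ) (h : a^2 + a*b + b^2 = 1) :
    (a = 1 ∧ b = 0) ∨ (a = -1 ∧ b = 0) ∨ (a = 0 ∧ b = 1) ∨ (a = 0 ∧ b = -1) ∨
      (a = 1 ∧ b = -1) ∨ (a = -1 ∧ b = 1) := by
  have hb1 : -1 ≤ b := by nlinarith [sq_nonneg (2*a+b), sq_nonneg (b-1), sq_nonneg (b+1)]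
  have hb2 : b ≤ 1 := by nlinarith [sq_nonneg (2*a+b), sq_nonneg (b-1), sq_nonneg (b+1)]
  have ha1 : -1 ≤ a := by nlinarith [sq_nonneg (a+2*b), sq_nonneg (a-1), sq_nonneg (a+1)]
  have ha2 : a ≤ 1 := by nlinarith [sq_nonneg (a+2*b), sq_nonneg (a-1), sq_nonneg (a+1)]
  interval_cases a <;> interval_cases b <;> omega

noncomputable def rep (a b : ℤ) : EuclideanSpace ℝ (Fin 2) :=
  vec2 (2*a + b*(1 - Real.sqrt 3)) (2*a + b*(1 + Real.sqrt 3))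

lemma rep_zero : rep 0 0 = 0 := by
  apply vec2_ext <;> simp [rep]

lemma e_v1 : vec2 2 2 = rep 1 0 := by
  apply vec2_ext <;> simp [rep]
lemma e_v1' : -vec2 2 2 = rep (-1) 0 := by
  apply vec2_ext <;> simp [rep] <;> norm_num
lemma e_v2 : vec2 (1 + Real.sqrt 3) (1 - Real.sqrt 3) = rep 1 (-1) := by
  apply vec2_ext <;> simp [rep] <;> ring
lemma e_v2' : -vec2 (1 + Real.sqrt 3) (1 - Real.sqrt 3) = rep (-1) 1 := by
  apply vec2_ext <;> simp [rep] <;> ring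
lemma e_v3 : vec2 (1 - Real.sqrt 3) (1 + Real.sqrt 3) = rep 0 1 := by
  apply vec2_ext <;> simp [rep] <;> ring
lemma e_v3' : -vec2 (1 - Real.sqrt 3) (1 + Real.sqrt 3) = rep 0 (-1) := by
  apply vec2_ext <;> simp [rep] <;> ring

lemma mem_span_iff' (x : EuclideanSpace ℝ (Fin 2)) :
    x ∈ Submodule.span ℤ {wA, wB} ↔ ∃ a b : ℤ, x = rep a b := mem_span_iff x

lemma norm_rep' (a b : ℤ) : ‖rep a b‖ ^ 2 = 8 * ((a:ℝ)^2 + a*b + b^2) := norm_rep a b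

lemma pmin_span : pMin (↑(Submodule.span ℤ {wA, wB}) : Set (EuclideanSpace ℝ (Fin 2))) = 8 := by
  apply IsLeast.csInf_eq
  constructor
  · refine ⟨rep 1 0, ?_, ?_, ?_⟩
    · exact (mem_span_iff' _).mpr ⟨1, 0, rfl⟩
    · exact rep_ne_zero 1 0 (by simp)
    · rw [norm_rep']; norm_num
  · rintro r ⟨x, hx, hx0, rfl⟩
    obtain ⟨a, b, rfl⟩ := (mem_span_iff' x).mp hx
    have h : ¬(a = 0 ∧ b = 0) := by
      rintro ⟨rfl, rfl⟩; exact hx0 rep_zero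
    have h1 := int_pos a b h
    have h2 : (1:ℝ) ≤ (a:ℝ)^2 + a*b + b^2 := by exact_mod_cast h1
    rw [norm_rep']; linarith

lemma minvecs_span :
    pMinVecs (↑(Submodule.span ℤ {wA, wB}) : Set (EuclideanSpace ℝ (Fin 2))) =
      {vec2 2 2, -vec2 2 2,
        vec2 (1 + Real.sqrt 3) (1 - Real.sqrt 3),
        -vec2 (1 + Real.sqrt 3) (1 - Real.sqrt 3),
        vec2 (1 - Real.sqrt 3) (1 + Real.sqrt 3),
        -vec2 (1 - Real.sqrt 3) (1 + Real.sqrt 3)} := by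
  unfold pMinVecs
  rw [pmin_span]
  ext x
  simp only [Set.mem_setOf_eq, Set.mem_insert_iff, Set.mem_singleton_iff, SetLike.mem_coe]
  constructor
  · rintro ⟨hx, hn⟩
    obtain ⟨a, b, rfl⟩ := (mem_span_iff' x).mp hx
    rw [norm_rep'] at hn
    have h1 : ((a^2 + a*b + b^2 : ℤ) : ℝ) = 1 := by push_cast; linarith
    have h2 : a^2 + a*b + b^2 = 1 := by exact_mod_cast h1
    rcases int_classify a b h2 with ⟨rfl, rfl⟩ | ⟨rfl, rfl⟩ | ⟨rfl, rfl⟩ | ⟨rfl, rfl⟩ |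
      ⟨rfl, rfl⟩ | ⟨rfl, rfl⟩
    · exact Or.inl e_v1.symm
    · exact Or.inr (Or.inl e_v1'.symm)
    · exact Or.inr (Or.inr (Or.inr (Or.inr (Or.inl e_v3.symm))))
    · exact Or.inr (Or.inr (Or.inr (Or.inr (Or.inr e_v3'.symm))))
    · exact Or.inr (Or.inr (Or.inl e_v2.symm))
    · exact Or.inr (Or.inr (Or.inr (Or.inl e_v2'.symm)))
  · intro hx
    have key : ∀ a b : ℤ, a^2 + a*b + b^2 = 1 → (rep a b ∈ Submodule.span ℤ {wA, wB}) ∧ ‖rep a b‖^2 = 8 := by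
      intro a b hab
      refine ⟨(mem_span_iff' _).mpr ⟨a, b, rfl⟩, ?_⟩
      rw [norm_rep']
      have : ((a^2 + a*b + b^2 : ℤ) : ℝ) = 1 := by rw [hab]; norm_num
      push_cast at this; linarith
    rcases hx with rfl | rfl | rfl | rfl | rfl | rfl
    · rw [e_v1]; exact key 1 0 (by norm_num)
    · rw [e_v1']; exact key (-1) 0 (by norm_num)
    · rw [e_v2]; exact key 1 (-1) (by norm_num)
    · rw [e_v2']; exact key (-1) 1 (by norm_num)
    · rw [e_v3]; exact key 0 1 (by norm_num)
    · rw [e_v3']; exact key 0 (-1) (by norm_num)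

lemma neg_vec2 (a b : ℝ) : -vec2 a b = vec2 (-a) (-b) := by
  apply vec2_ext <;> simp

lemma vec2_ne (u v u' v' : ℝ) (h : u ≠ u') : vec2 u v ≠ vec2 u' v' :=
  fun he => h (by simpa using congrArg (fun v => v 0) he)

lemma ncard_six :
    ({vec2 2 2, -vec2 2 2,
        vec2 (1 + Real.sqrt 3) (1 - Real.sqrt 3),
        -vec2 (1 + Real.sqrt 3) (1 - Real.sqrt 3),
        vec2 (1 - Real.sqrt 3) (1 + Real.sqrt 3),
        -vec2 (1 - Real.sqrt 3) (1 + Real.sqrt 3)} :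
      Set (EuclideanSpace ℝ (Fin 2))).ncard = 6 := by
  have g1 := sqrt3_gt
  have g2 := sqrt3_lt
  simp only [neg_vec2]
  rw [Set.ncard_insert_of_notMem, Set.ncard_insert_of_notMem,
    Set.ncard_insert_of_notMem, Set.ncard_insert_of_notMem,
    Set.ncard_insert_of_notMem, Set.ncard_singleton]
  · simp only [Set.mem_singleton_iff]
    exact vec2_ne _ _ _ _ (by linarith)
  · simp only [Set.mem_insert_iff, Set.mem_singleton_iff]
    push_neg
    exact ⟨vec2_ne _ _ _ _ (by linarith), vec2_ne _ _ _ _ (by linarith)⟩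
  · simp only [Set.mem_insert_iff, Set.mem_singleton_iff]
    push_neg
    exact ⟨vec2_ne _ _ _ _ (by linarith), vec2_ne _ _ _ _ (by linarith),
      vec2_ne _ _ _ _ (by linarith)⟩
  · simp only [Set.mem_insert_iff, Set.mem_singleton_iff]
    push_neg
    exact ⟨vec2_ne _ _ _ _ (by linarith), vec2_ne _ _ _ _ (by linarith),
      vec2_ne _ _ _ _ (by linarith), vec2_ne _ _ _ _ (by linarith)⟩
  · simp only [Set.mem_insert_iff, Set.mem_singleton_iff]
    push_neg
    exact ⟨vec2_ne _ _ _ _ (by linarith), vec2_ne _ _ _ _ (by linarith),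
      vec2_ne _ _ _ _ (by linarith), vec2_ne _ _ _ _ (by linarith),
      vec2_ne _ _ _ _ (by linarith)⟩

lemma wr_span :
    Submodule.span ℝ
      ({vec2 2 2, -vec2 2 2,
        vec2 (1 + Real.sqrt 3) (1 - Real.sqrt 3),
        -vec2 (1 + Real.sqrt 3) (1 - Real.sqrt 3),
        vec2 (1 - Real.sqrt 3) (1 + Real.sqrt 3),
        -vec2 (1 - Real.sqrt 3) (1 + Real.sqrt 3)} :
        Set (EuclideanSpace ℝ (Fin 2))) = ⊤ := by
  have hs : Real.sqrt 3 ≠ 0 := by have := sqrt3_gt; linarith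
  rw [Submodule.eq_top_iff']
  intro x
  set S : Set (EuclideanSpace ℝ (Fin 2)) :=
    {vec2 2 2, -vec2 2 2,
      vec2 (1 + Real.sqrt 3) (1 - Real.sqrt 3),
      -vec2 (1 + Real.sqrt 3) (1 - Real.sqrt 3),
      vec2 (1 - Real.sqrt 3) (1 + Real.sqrt 3),
      -vec2 (1 - Real.sqrt 3) (1 + Real.sqrt 3)} with hS
  have m1 : vec2 2 2 ∈ Submodule.span ℝ S := Submodule.subset_span (by simp [hS])
  have m2 : vec2 (1 + Real.sqrt 3) (1 - Real.sqrt 3) ∈ Submodule.span ℝ S :=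
    Submodule.subset_span (by simp [hS])
  have m3 : vec2 (1 - Real.sqrt 3) (1 + Real.sqrt 3) ∈ Submodule.span ℝ S :=
    Submodule.subset_span (by simp [hS])
  have e0 : vec2 1 0 = (1/4 : ℝ) • vec2 2 2
      + (1/(4*Real.sqrt 3)) • vec2 (1 + Real.sqrt 3) (1 - Real.sqrt 3)
      + (-(1/(4*Real.sqrt 3))) • vec2 (1 - Real.sqrt 3) (1 + Real.sqrt 3) := by
    apply vec2_ext <;> simp only [PiLp.add_apply, PiLp.smul_apply, vec2_app0, vec2_app1, smul_eq_mul] <;> field_simp <;> ring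
  have e1 : vec2 0 1 = (1/4 : ℝ) • vec2 2 2
      + (-(1/(4*Real.sqrt 3))) • vec2 (1 + Real.sqrt 3) (1 - Real.sqrt 3)
      + (1/(4*Real.sqrt 3)) • vec2 (1 - Real.sqrt 3) (1 + Real.sqrt 3) := by
    apply vec2_ext <;> simp only [PiLp.add_apply, PiLp.smul_apply, vec2_app0, vec2_app1, smul_eq_mul] <;> field_simp <;> ring
  have he0 : vec2 1 0 ∈ Submodule.span ℝ S := by
    rw [e0]
    exact add_mem (add_mem (Submodule.smul_mem _ _ m1) (Submodule.smul_mem _ _ m2))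
      (Submodule.smul_mem _ _ m3)
  have he1 : vec2 0 1 ∈ Submodule.span ℝ S := by
    rw [e1]
    exact add_mem (add_mem (Submodule.smul_mem _ _ m1) (Submodule.smul_mem _ _ m2))
      (Submodule.smul_mem _ _ m3)
  have hx : x = x 0 • vec2 1 0 + x 1 • vec2 0 1 := by
    apply vec2_ext <;> simp
  rw [hx]
  exact add_mem (Submodule.smul_mem _ _ he0) (Submodule.smul_mem _ _ he1)

lemma sqrt2_mul : Real.sqrt 2 * Real.sqrt 2 = 2 := Real.mul_self_sqrt (by norm_num)

noncomputable def rotL : EuclideanSpace ℝ (Fin 2) ≃ₗ[ℝ] EuclideanSpace ℝ (Fin 2) where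
  toFun x := vec2 ((x 0 + x 1) * (Real.sqrt 2 / 2)) ((x 1 - x 0) * (Real.sqrt 2 / 2))
  invFun y := vec2 ((y 0 - y 1) * (Real.sqrt 2 / 2)) ((y 0 + y 1) * (Real.sqrt 2 / 2))
  map_add' x y := by apply vec2_ext <;> simp <;> ring
  map_smul' r x := by apply vec2_ext <;> simp <;> ring
  left_inv x := by
    apply vec2_ext
    · show ((x 0 + x 1) * (Real.sqrt 2/2) - (x 1 - x 0) * (Real.sqrt 2/2)) * (Real.sqrt 2/2) = x 0
      linear_combination (x 0/2) * sqrt2_mul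
    · show ((x 0 + x 1) * (Real.sqrt 2/2) + (x 1 - x 0) * (Real.sqrt 2/2)) * (Real.sqrt 2/2) = x 1
      linear_combination (x 1/2) * sqrt2_mul
  right_inv y := by
    apply vec2_ext
    · show ((y 0 - y 1) * (Real.sqrt 2/2) + (y 0 + y 1) * (Real.sqrt 2/2)) * (Real.sqrt 2/2) = y 0
      linear_combination (y 0/2) * sqrt2_mul
    · show ((y 0 + y 1) * (Real.sqrt 2/2) - (y 0 - y 1) * (Real.sqrt 2/2)) * (Real.sqrt 2/2) = y 1
      linear_combination (y 1/2) * sqrt2_mul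

noncomputable def rotI : EuclideanSpace ℝ (Fin 2) ≃ₗᵢ[ℝ] EuclideanSpace ℝ (Fin 2) :=
  ⟨rotL, by
    intro x
    rw [EuclideanSpace.norm_eq, EuclideanSpace.norm_eq]
    congr 1
    simp only [Fin.sum_univ_two, Real.norm_eq_abs, sq_abs]
    have h0 : rotL x 0 = (x 0 + x 1) * (Real.sqrt 2 / 2) := rfl
    have h1 : rotL x 1 = (x 1 - x 0) * (Real.sqrt 2 / 2) := rfl
    rw [h0, h1]
    linear_combination ((x 0^2 + x 1^2)/2) * sqrt2_mul⟩

noncomputable def simG : EuclideanSpace ℝ (Fin 2) →ₗ[ℝ] EuclideanSpace ℝ (Fin 2) :=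
  (Real.sqrt 2 / 4) • rotL.toLinearMap

lemma sim_hex :
    pSimilar (↑(Submodule.span ℤ {wA, wB}) : Set (EuclideanSpace ℝ (Fin 2)))
      (↑hexLattice : Set (EuclideanSpace ℝ (Fin 2))) := by
  refine ⟨Real.sqrt 2 / 4, rotI, ?_, ?_⟩
  · have : (0:ℝ) < Real.sqrt 2 := Real.sqrt_pos.mpr (by norm_num)
    positivity
  · have h1 : (fun x => (Real.sqrt 2 / 4) • rotI x) ''
        (↑(Submodule.span ℤ {wA, wB}) : Set (EuclideanSpace ℝ (Fin 2)))
        = ⇑(simG.restrictScalars ℤ) '' ↑(Submodule.span ℤ {wA, wB}) := rfl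
    rw [h1, ← Submodule.map_coe, Submodule.map_span, Set.image_pair]
    have hA : (simG.restrictScalars ℤ) wA = vec2 1 0 := by
      apply vec2_ext
      · show (Real.sqrt 2 / 4) * ((2 + 2) * (Real.sqrt 2 / 2)) = 1
        linear_combination (1/2) * sqrt2_mul
      · show (Real.sqrt 2 / 4) * ((2 - 2) * (Real.sqrt 2 / 2)) = 0
        norm_num
    have hB : (simG.restrictScalars ℤ) wB = vec2 (1/2) (Real.sqrt 3 / 2) := by
      apply vec2_ext
      · show (Real.sqrt 2 / 4) * (((1 - Real.sqrt 3) + (1 + Real.sqrt 3)) * (Real.sqrt 2 / 2)) = 1/2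
        linear_combination (1/4) * sqrt2_mul
      · show (Real.sqrt 2 / 4) * (((1 + Real.sqrt 3) - (1 - Real.sqrt 3)) * (Real.sqrt 2 / 2)) = Real.sqrt 3 / 2
        linear_combination (Real.sqrt 3 / 4) * sqrt2_mul
    rw [hA, hB]
    rfl

open Polynomial in
/-- Let `K = ℚ(√3)` and `I = ⟨1 - √3⟩ ⊆ O_K = ℤ[√3]`. Then the lattice
`Λ_K(I) = σ(I) ⊂ ℝ²` is well-rounded with exactly the 6 minimal vectors
`±(2,2)`, `±(1+√3, 1-√3)`, `±(1-√3, 1+√3)`, and `Λ_K(I)` is similar to the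
hexagonal lattice. -/
theorem statement17 (K : Type*) [Field K] [NumberField K]
    (hdeg : Module.finrank ℚ K = 2) (α : K) (hα : α ^ 2 = 3)
    (σ₁ σ₂ : K →+* ℝ) (hne : σ₁ ≠ σ₂) (hσ₁ : σ₁ α = Real.sqrt 3)
    (β : 𝓞 K) (hβ : algebraMap (𝓞 K) K β = α) :
    pIsWellRounded ((fun x : K => vec2 (σ₁ x) (σ₂ x)) ''
        (algebraMap (𝓞 K) K '' ((Ideal.span {1 - β} : Ideal (𝓞 K)) : Set (𝓞 K)))) ∧
    pMinVecs ((fun x : K => vec2 (σ₁ x) (σ₂ x)) ''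
        (algebraMap (𝓞 K) K '' ((Ideal.span {1 - β} : Ideal (𝓞 K)) : Set (𝓞 K)))) =
      {vec2 2 2, -vec2 2 2,
        vec2 (1 + Real.sqrt 3) (1 - Real.sqrt 3),
        -vec2 (1 + Real.sqrt 3) (1 - Real.sqrt 3),
        vec2 (1 - Real.sqrt 3) (1 + Real.sqrt 3),
        -vec2 (1 - Real.sqrt 3) (1 + Real.sqrt 3)} ∧
    (pMinVecs ((fun x : K => vec2 (σ₁ x) (σ₂ x)) ''
        (algebraMap (𝓞 K) K ''
          ((Ideal.span {1 - β} : Ideal (𝓞 K)) : Set (𝓞 K))))).ncard = 6 ∧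
    pSimilar ((fun x : K => vec2 (σ₁ x) (σ₂ x)) ''
        (algebraMap (𝓞 K) K '' ((Ideal.span {1 - β} : Ideal (𝓞 K)) : Set (𝓞 K))))
      (hexLattice : Set (EuclideanSpace ℝ (Fin 2))) := by
  have hirr : ∀ p : ℚ, algebraMap ℚ K p ≠ α := by
    intro p h
    have h1 : σ₁ (algebraMap ℚ K p) = (p : ℝ) := by
      have := eq_ratCast (σ₁.comp (algebraMap ℚ K)) p
      simpa using this
    rw [h, hσ₁] at h1
    exact (Nat.Prime.irrational_sqrt (p := 3) (by norm_num)) ⟨p, by exact_mod_cast h1.symm⟩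
  -- {1, α} is a basis
  have hα0 : α ≠ 0 := by
    intro h; rw [h] at hα; norm_num at hα
  have li : LinearIndependent ℚ ![(1 : K), α] := by
    rw [linearIndependent_fin2]
    constructor
    · simpa using hα0
    · intro a ha
      simp only [Matrix.cons_val_one, Matrix.head_cons, Matrix.cons_val_zero] at ha
      have ha0 : a ≠ 0 := by
        intro h; rw [h, zero_smul] at ha; exact one_ne_zero ha.symm
      apply hirr a⁻¹
      rw [Algebra.smul_def] at ha
      rw [map_inv₀]
      exact inv_eq_of_mul_eq_one_right ha
  have hcard : Fintype.card (Fin 2) = Module.finrank ℚ K := by simp [hdeg]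
  set B := basisOfLinearIndependentOfCardEqFinrank li hcard with hB
  have hBc : ∀ i, B i = ![(1:K), α] i := by
    intro i; rw [hB, coe_basisOfLinearIndependentOfCardEqFinrank]
  have hrep : ∀ x : K, ∃ p q : ℚ, x = algebraMap ℚ K p + algebraMap ℚ K q * α := by
    intro x
    have hs := B.sum_repr x
    rw [Fin.sum_univ_two, hBc 0, hBc 1] at hs
    simp only [Matrix.cons_val_zero, Matrix.cons_val_one, Matrix.head_cons] at hs
    rw [Algebra.smul_def, Algebra.smul_def, mul_one] at hs
    exact ⟨_, _, hs.symm⟩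
  -- σ₂ α = -√3
  have hratσ : ∀ (σ : K →+* ℝ) (p : ℚ), σ (algebraMap ℚ K p) = (p : ℝ) := by
    intro σ p
    have := eq_ratCast (σ.comp (algebraMap ℚ K)) p
    simpa using this
  have hσ₂ : σ₂ α = -Real.sqrt 3 := by
    have h2 : σ₂ α ^ 2 = 3 := by
      rw [← map_pow, hα]
      exact map_ofNat σ₂ 3
    have h3 : (σ₂ α - Real.sqrt 3) * (σ₂ α + Real.sqrt 3) = 0 := by
      have := Real.sq_sqrt (show (0:ℝ) ≤ 3 by norm_num)
      linear_combination h2 - this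
    rcases mul_eq_zero.mp h3 with h | h
    · exfalso
      apply hne
      ext x
      obtain ⟨p, q, rfl⟩ := hrep x
      simp only [map_add, map_mul, hratσ σ₁, hratσ σ₂, hσ₁]
      rw [show σ₂ α = Real.sqrt 3 by linarith]
    · linarith
  -- every algebraic integer is a ℤ-combination of 1 and α
  have hOK : ∀ γ : 𝓞 K, ∃ a b : ℤ,
      algebraMap (𝓞 K) K γ = (a : K) + (b : K) * α := by
    intro γ
    set x := algebraMap (𝓞 K) K γ with hx
    obtain ⟨p, q, hpq⟩ := hrep x
    by_cases hq : q = 0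
    · have hxint : IsIntegral ℤ x := RingOfIntegers.isIntegral_coe γ
      rw [hpq, hq, map_zero, zero_mul, add_zero] at hxint ⊢
      have hpint : IsIntegral ℤ p :=
        (isIntegral_algebraMap_iff (algebraMap ℚ K).injective).mp hxint
      obtain ⟨a, ha⟩ := IsIntegrallyClosed.isIntegral_iff.mp hpint
      exact ⟨a, 0, by rw [← ha]; push_cast; simp⟩
    · -- minimal polynomial is X² - (2p)X + (p² - 3q²), with integer coefficients
      have hγint : IsIntegral ℤ γ := IsIntegralClosure.isIntegral ℤ K γ
      have hmp : minpoly ℚ x = (minpoly ℤ γ).map (algebraMap ℤ ℚ) :=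
        minpoly.isIntegrallyClosed_eq_field_fractions ℚ K hγint
      set c1 : ℚ := 2 * p with hc1def
      set c0 : ℚ := p ^ 2 - 3 * q ^ 2 with hc0def
      set P : ℚ[X] := X ^ 2 - C c1 * X + C c0 with hP
      have hPm : P.Monic := by rw [hP]; monicity!
      have hPd : P.natDegree = 2 := by rw [hP]; compute_degree!
      have hroot : aeval x P = 0 := by
        rw [hP, hc1def, hc0def]
        simp only [map_add, map_sub, map_mul, map_pow, aeval_X, aeval_C]
        rw [hpq]
        simp only [map_mul, map_sub, map_pow, map_ofNat]
        ring_nf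
        linear_combination ((algebraMap ℚ K) q ^ 2) * hα
      have hxint : IsIntegral ℚ x := IsIntegral.tower_top (RingOfIntegers.isIntegral_coe γ)
      have hdvd : minpoly ℚ x ∣ P := minpoly.dvd ℚ x hroot
      have hnotmem : x ∉ (algebraMap ℚ K).range := by
        rintro ⟨r, hr⟩
        apply hirr ((r - p) / q)
        rw [map_div₀, map_sub]
        rw [← hr] at hpq
        have hq0 : algebraMap ℚ K q ≠ 0 := by
          simpa using hq
        rw [div_eq_iff hq0]
        linear_combination hpq
      have hdeg2 : 2 ≤ (minpoly ℚ x).natDegree := by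
        have h1 : (minpoly ℚ x).natDegree ≠ 1 := by
          intro h
          have : (minpoly ℚ x).degree = 1 := by
            rw [Polynomial.degree_eq_natDegree (minpoly.ne_zero hxint), h]
            rfl
          exact hnotmem ((minpoly.degree_eq_one_iff).mp this)
        have h2 := minpoly.natDegree_pos hxint
        omega
      have hPeq : P = minpoly ℚ x :=
        Polynomial.eq_of_monic_of_dvd_of_natDegree_le (minpoly.monic hxint) hPm hdvd
          (by rw [hPd]; exact hdeg2)
      -- extract integer coefficients
      have hc1 : P.coeff 1 = -c1 := by
        rw [hP]
        simp [coeff_X_pow]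
      have hc0 : P.coeff 0 = c0 := by
        rw [hP]
        simp [coeff_X_pow]
      have hm : ∃ m : ℤ, (m : ℚ) = 2 * p := by
        refine ⟨-((minpoly ℤ γ).coeff 1), ?_⟩
        have := congrArg (fun P => P.coeff 1) (hPeq.trans hmp)
        simp only [Polynomial.coeff_map, eq_intCast] at this
        rw [hc1, hc1def] at this
        push_cast
        linarith [this]
      have hn : ∃ n : ℤ, (n : ℚ) = p ^ 2 - 3 * q ^ 2 := by
        refine ⟨(minpoly ℤ γ).coeff 0, ?_⟩
        have := congrArg (fun P => P.coeff 0) (hPeq.trans hmp)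
        simp only [Polynomial.coeff_map, eq_intCast] at this
        rw [hc0, hc0def] at this
        exact this.symm
      obtain ⟨m, hm⟩ := hm
      obtain ⟨n, hn⟩ := hn
      -- 2q is an integer
      have hv : ∃ w : ℤ, (w : ℚ) = 2 * q := by
        have h9 : ((6:ℚ) * q) ^ 2 = ((3 * (m ^ 2 - 4 * n) : ℤ) : ℚ) := by
          push_cast
          linear_combination (-3 * ((m:ℚ) + 2 * p)) * hm + 12 * hn
        have hvint : IsIntegral ℤ ((6:ℚ) * q) := by
          refine ⟨X ^ 2 - C (3 * (m ^ 2 - 4 * n)), ?_, ?_⟩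
          · monicity!
          · simp only [eval₂_sub, eval₂_pow, eval₂_X, eval₂_C]
            rw [sub_eq_zero, eq_intCast]
            exact_mod_cast h9
        obtain ⟨k, hk⟩ := IsIntegrallyClosed.isIntegral_iff.mp hvint
        have hk' : (k : ℚ) = 6 * q := by rw [← hk]; simp [eq_intCast]
        have hk3 : k ^ 2 = 3 * (m ^ 2 - 4 * n) := by
          have h := h9
          rw [← hk'] at h
          exact_mod_cast h
        have h3k : (3:ℤ) ∣ k := by
          have : (3:ℤ) ∣ k ^ 2 := ⟨m^2 - 4*n, hk3⟩
          exact (Int.Prime.dvd_pow' (by norm_num) this)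
        obtain ⟨w, rfl⟩ := h3k
        refine ⟨w, ?_⟩
        push_cast at hk'
        linarith
      obtain ⟨w, hw⟩ := hv
      -- parity: m and w are both even
      have hmw : m ^ 2 - 3 * w ^ 2 = 4 * n := by
        have : ((m:ℚ))^2 - 3 * w^2 = 4 * n := by
          rw [hm, hw]
          linear_combination (-4 : ℚ) * hn
        exact_mod_cast this
      have hpar : 2 ∣ m ∧ 2 ∣ w := by
        rcases Int.even_or_odd m with ⟨s, rfl⟩ | ⟨s, rfl⟩ <;>
          rcases Int.even_or_odd w with ⟨t, rfl⟩ | ⟨t, rfl⟩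
        · exact ⟨⟨s, by ring⟩, ⟨t, by ring⟩⟩
        · exfalso
          have h2 : 4*(s*s) - 12*(t*t) - 12*t - 3 = 4*n := by linear_combination hmw
          generalize s*s = S at h2
          generalize t*t = T at h2
          omega
        · exfalso
          have h2 : 4*(s*s) + 4*s + 1 - 12*(t*t) = 4*n := by linear_combination hmw
          generalize s*s = S at h2
          generalize t*t = T at h2
          omega
        · exfalso
          have h2 : 4*(s*s) + 4*s - 12*(t*t) - 12*t - 2 = 4*n := by linear_combination hmw
          generalize s*s = S at h2
          generalize t*t = T at h2
          omega
      obtain ⟨⟨a, rfl⟩, ⟨b, rfl⟩⟩ := hpar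
      refine ⟨a, b, ?_⟩
      have hpa : p = (a : ℚ) := by push_cast at hm; linarith
      have hqb : q = (b : ℚ) := by push_cast at hw; linarith
      rw [hpq, hpa, hqb]
      norm_num

  set L : Set (EuclideanSpace ℝ (Fin 2)) :=
    ((fun x : K => vec2 (σ₁ x) (σ₂ x)) ''
      (algebraMap (𝓞 K) K '' ((Ideal.span {1 - β} : Ideal (𝓞 K)) : Set (𝓞 K)))) with hLdef
  have hL : L = (↑(Submodule.span ℤ {wA, wB}) : Set (EuclideanSpace ℝ (Fin 2))) := by
    rw [hLdef]
    ext y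
    constructor
    · rintro ⟨xk, ⟨γ, hγ, rfl⟩, rfl⟩
      rw [SetLike.mem_coe] at hγ
      obtain ⟨δ, hδ⟩ := Ideal.mem_span_singleton'.mp hγ
      obtain ⟨p, q, hδK⟩ := hOK δ
      have hxk : algebraMap (𝓞 K) K γ = ((p : K) + (q : K) * α) * (1 - α) := by
        rw [← hδ, map_mul, hδK, map_sub, map_one, hβ]
      have hs1 : σ₁ (algebraMap (𝓞 K) K γ)
          = ((p:ℝ) + (q:ℝ) * Real.sqrt 3) * (1 - Real.sqrt 3) := by
        rw [hxk]
        simp only [map_mul, map_add, map_sub, map_one, map_intCast, hσ₁]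
      have hs2 : σ₂ (algebraMap (𝓞 K) K γ)
          = ((p:ℝ) + (q:ℝ) * (-Real.sqrt 3)) * (1 - (-Real.sqrt 3)) := by
        rw [hxk]
        simp only [map_mul, map_add, map_sub, map_one, map_intCast, hσ₂]
      rw [SetLike.mem_coe, mem_span_iff']
      refine ⟨-q, p - q, ?_⟩
      show vec2 (σ₁ (algebraMap (𝓞 K) K γ)) (σ₂ (algebraMap (𝓞 K) K γ)) = _
      rw [hs1, hs2]
      apply vec2_ext
      · show ((p:ℝ) + (q:ℝ) * Real.sqrt 3) * (1 - Real.sqrt 3)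
          = 2*((-q : ℤ):ℝ) + ((p - q : ℤ):ℝ)*(1 - Real.sqrt 3)
        push_cast
        linear_combination (-(q:ℝ)) * sqrt3_sq
      · show ((p:ℝ) + (q:ℝ) * (-Real.sqrt 3)) * (1 - (-Real.sqrt 3))
          = 2*((-q : ℤ):ℝ) + ((p - q : ℤ):ℝ)*(1 + Real.sqrt 3)
        push_cast
        linear_combination (-(q:ℝ)) * sqrt3_sq
    · intro hy
      rw [SetLike.mem_coe, mem_span_iff'] at hy
      obtain ⟨m, n, rfl⟩ := hy
      set γ : 𝓞 K := (((n - m : ℤ) : 𝓞 K) + ((-m : ℤ) : 𝓞 K) * β) * (1 - β) with hγdef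
      refine ⟨algebraMap (𝓞 K) K γ, ⟨γ, ?_, rfl⟩, ?_⟩
      · rw [SetLike.mem_coe]
        exact Ideal.mem_span_singleton'.mpr ⟨_, rfl⟩
      · have hAγ : algebraMap (𝓞 K) K γ
            = (((n - m : ℤ) : K) + ((-m : ℤ) : K) * α) * (1 - α) := by
          rw [hγdef, map_mul, map_add, map_mul, map_sub, map_one, hβ, map_intCast, map_intCast]
        have hs1 : σ₁ (algebraMap (𝓞 K) K γ)
            = (((n - m : ℤ):ℝ) + ((-m : ℤ):ℝ) * Real.sqrt 3) * (1 - Real.sqrt 3) := by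
          rw [hAγ]
          simp only [map_mul, map_add, map_sub, map_one, map_intCast, hσ₁]
        have hs2 : σ₂ (algebraMap (𝓞 K) K γ)
            = (((n - m : ℤ):ℝ) + ((-m : ℤ):ℝ) * (-Real.sqrt 3)) * (1 - (-Real.sqrt 3)) := by
          rw [hAγ]
          simp only [map_mul, map_add, map_sub, map_one, map_intCast, hσ₂]
        show vec2 (σ₁ (algebraMap (𝓞 K) K γ)) (σ₂ (algebraMap (𝓞 K) K γ)) = _
        rw [hs1, hs2]
        apply vec2_ext
        · show (((n - m : ℤ):ℝ) + ((-m : ℤ):ℝ) * Real.sqrt 3) * (1 - Real.sqrt 3)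
            = 2*(m:ℝ) + (n:ℝ)*(1 - Real.sqrt 3)
          push_cast
          linear_combination (m:ℝ) * sqrt3_sq
        · show (((n - m : ℤ):ℝ) + ((-m : ℤ):ℝ) * (-Real.sqrt 3)) * (1 - (-Real.sqrt 3))
            = 2*(m:ℝ) + (n:ℝ)*(1 + Real.sqrt 3)
          push_cast
          linear_combination (m:ℝ) * sqrt3_sq
  rw [hL]
  refine ⟨?_, minvecs_span, ?_, sim_hex⟩
  · unfold pIsWellRounded
    rw [minvecs_span]
    exact wr_span
  · rw [minvecs_span]
    exact ncard_six
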